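/- Let A be a real n×n matrix such that -A² is symmetric positive definite. Define j(A) = A·(-A²)^{-1/2}, where (-A²)^{-1/2} denotes the inverse of the unique symmetric positive definite square root of -A². Then j(A)² = -I. Moreover, if J is a real matrix with J² = -I and -J² = I positive definite trivially, then j(J) = J; i.e., j is a retraction onto complex structures among matrices A with -A² symmetric positive definite. -/

import Mathlib

open scoped ComplexOrder in
/-- The positive semidefinite square root of a positive semidefinite matrix (as defined in
the older Mathlib, where `Matrix.PosSemidef.sqrt` existed). -/
noncomputable def Matrix.PosSemidef.sqrt {n : Type*} {𝕜 : Type*} [Fintype n] [RCLike 𝕜]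
    [DecidableEq n] {A : Matrix n n 𝕜} (hA : A.PosSemidef) : Matrix n n 𝕜 :=
  hA.1.eigenvectorUnitary.1 * Matrix.diagonal ((↑) ∘ (Real.sqrt ·) ∘ hA.1.eigenvalues) *
    (star hA.1.eigenvectorUnitary : Matrix n n 𝕜)

open Matrix

lemma posSemidef_sqrt_mul_self' {m : Type*} [Fintype m] [DecidableEq m]
    {M : Matrix m m ℝ} (hM : M.PosSemidef) : hM.sqrt * hM.sqrt = M := by
  set U : Matrix m m ℝ := hM.1.eigenvectorUnitary.1 with hU
  have hUU' : star U * U = 1 := (Matrix.mem_unitaryGroup_iff').mp hM.1.eigenvectorUnitary.2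
  have hspec : M = U * Matrix.diagonal (RCLike.ofReal ∘ hM.1.eigenvalues) * star U :=
    hM.1.spectral_theorem
  have hsqrt : hM.sqrt = U * Matrix.diagonal (Real.sqrt ∘ hM.1.eigenvalues) * star U := by
    rw [Matrix.PosSemidef.sqrt]
    rfl
  rw [hsqrt]
  conv_rhs => rw [hspec]
  calc U * Matrix.diagonal (Real.sqrt ∘ hM.1.eigenvalues) * star U *
        (U * Matrix.diagonal (Real.sqrt ∘ hM.1.eigenvalues) * star U)
      = U * (Matrix.diagonal (Real.sqrt ∘ hM.1.eigenvalues) * (star U * U) *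
        Matrix.diagonal (Real.sqrt ∘ hM.1.eigenvalues)) * star U := by
        simp only [Matrix.mul_assoc]
    _ = U * Matrix.diagonal (RCLike.ofReal ∘ hM.1.eigenvalues) * star U := by
        rw [hUU', Matrix.mul_one, Matrix.diagonal_mul_diagonal]
        congr 3
        funext i
        exact Real.mul_self_sqrt (hM.eigenvalues_nonneg i)

lemma posSemidef_sqrt_eq_one' {m : Type*} [Fintype m] [DecidableEq m]
    {M : Matrix m m ℝ} (hM : M.PosSemidef) (h : M = 1) : hM.sqrt = 1 := by
  set U : Matrix m m ℝ := hM.1.eigenvectorUnitary.1 with hU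
  have hUU : U * star U = 1 := (Matrix.mem_unitaryGroup_iff).mp hM.1.eigenvectorUnitary.2
  have hUU' : star U * U = 1 := (Matrix.mem_unitaryGroup_iff').mp hM.1.eigenvectorUnitary.2
  have hspec : M = U * Matrix.diagonal (RCLike.ofReal ∘ hM.1.eigenvalues) * star U :=
    hM.1.spectral_theorem
  have hD : Matrix.diagonal (RCLike.ofReal ∘ hM.1.eigenvalues) = (1 : Matrix m m ℝ) := by
    calc Matrix.diagonal (RCLike.ofReal ∘ hM.1.eigenvalues)
        = (star U * U) * Matrix.diagonal (RCLike.ofReal ∘ hM.1.eigenvalues) * (star U * U) := by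
          rw [hUU', Matrix.one_mul, Matrix.mul_one]
      _ = star U * (U * Matrix.diagonal (RCLike.ofReal ∘ hM.1.eigenvalues) * star U) * U := by
          simp only [Matrix.mul_assoc]
      _ = 1 := by rw [← hspec, h, Matrix.mul_one, hUU']
  have hμ : ∀ i, hM.1.eigenvalues i = 1 := by
    intro i
    have := congrFun (congrFun hD i) i
    simpa using this
  have hsqrt : hM.sqrt = U * Matrix.diagonal (Real.sqrt ∘ hM.1.eigenvalues) * star U := by
    rw [Matrix.PosSemidef.sqrt]
    rfl
  have hE : Matrix.diagonal (Real.sqrt ∘ hM.1.eigenvalues) = (1 : Matrix m m ℝ) := by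
    rw [← Matrix.diagonal_one]
    congr 1
    funext i
    simp [hμ i]
  rw [hsqrt, hE, Matrix.mul_one, hUU]

/-- A matrix commuting with a positive semidefinite matrix commutes with its square root. -/
lemma commute_posSemidef_sqrt {m : Type*} [Fintype m] [DecidableEq m]
    {M X : Matrix m m ℝ} (hM : M.PosSemidef) (h : X * M = M * X) :
    X * hM.sqrt = hM.sqrt * X := by
  set U : Matrix m m ℝ := hM.1.eigenvectorUnitary.1 with hU
  have hUU : U * star U = 1 := (Matrix.mem_unitaryGroup_iff).mp hM.1.eigenvectorUnitary.2
  have hUU' : star U * U = 1 := (Matrix.mem_unitaryGroup_iff').mp hM.1.eigenvectorUnitary.2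
  set μ : m → ℝ := hM.1.eigenvalues with hμ
  have hspec : M = U * Matrix.diagonal (RCLike.ofReal ∘ μ) * star U := hM.1.spectral_theorem
  have hofReal : (RCLike.ofReal ∘ μ : m → ℝ) = μ := rfl
  set B : Matrix m m ℝ := star U * X * U with hB
  -- B commutes with diagonal μ
  have hBD : B * Matrix.diagonal μ = Matrix.diagonal μ * B := by
    have h1 : star U * (X * M) * U = star U * (M * X) * U := by rw [h]
    have h2 : star U * (X * (U * Matrix.diagonal μ * star U)) * U
        = star U * ((U * Matrix.diagonal μ * star U) * X) * U := by
      rw [hofReal] at hspec; rw [← hspec]; exact h1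
    calc B * Matrix.diagonal μ
        = (star U * X * U) * Matrix.diagonal μ * (star U * U) := by rw [hUU', mul_one]
      _ = star U * (X * (U * Matrix.diagonal μ * star U)) * U := by
          simp only [Matrix.mul_assoc]
      _ = star U * ((U * Matrix.diagonal μ * star U) * X) * U := h2
      _ = (star U * U) * Matrix.diagonal μ * (star U * X * U) := by
          simp only [Matrix.mul_assoc]
      _ = Matrix.diagonal μ * B := by rw [hUU', one_mul]
  have hkey : ∀ i j, B i j * μ j = μ i * B i j := by
    intro i j
    have := congrFun (congrFun hBD i) j
    simpa [Matrix.mul_diagonal, Matrix.diagonal_mul] using this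
  -- hence B commutes with diagonal (sqrt ∘ μ)
  have hBE : B * Matrix.diagonal (Real.sqrt ∘ μ) = Matrix.diagonal (Real.sqrt ∘ μ) * B := by
    ext i j
    simp only [Matrix.mul_diagonal, Matrix.diagonal_mul, Function.comp_apply]
    rcases eq_or_ne (B i j) 0 with h0 | h0
    · simp [h0]
    · have : μ j = μ i := by
        have := hkey i j
        rw [mul_comm (μ i) (B i j)] at this
        exact mul_left_cancel₀ h0 this
      rw [this]; ring
  have hsqrt : hM.sqrt = U * Matrix.diagonal (Real.sqrt ∘ μ) * star U := by
    rw [Matrix.PosSemidef.sqrt]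
    rfl
  have hX : X = U * B * star U := by
    rw [hB]
    calc X = (U * star U) * X * (U * star U) := by rw [hUU, one_mul, mul_one]
      _ = U * (star U * X * U) * star U := by simp only [Matrix.mul_assoc]
  rw [hsqrt]
  calc X * (U * Matrix.diagonal (Real.sqrt ∘ μ) * star U)
      = (U * B * star U) * (U * Matrix.diagonal (Real.sqrt ∘ μ) * star U) := by rw [← hX]
    _ = U * (B * (star U * U) * Matrix.diagonal (Real.sqrt ∘ μ)) * star U := by
        simp only [Matrix.mul_assoc]
    _ = U * (B * Matrix.diagonal (Real.sqrt ∘ μ)) * star U := by rw [hUU', mul_one]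
    _ = U * (Matrix.diagonal (Real.sqrt ∘ μ) * B) * star U := by rw [hBE]
    _ = (U * Matrix.diagonal (Real.sqrt ∘ μ) * star U) * (U * B * star U) := by
        rw [Matrix.mul_assoc U (Matrix.diagonal (Real.sqrt ∘ μ) * B) (star U)]
        simp only [Matrix.mul_assoc, hUU']
        rw [show star U * (U * (B * star U)) = (star U * U) * (B * star U) by
          simp only [Matrix.mul_assoc]]
        rw [hUU', one_mul]
    _ = (U * Matrix.diagonal (Real.sqrt ∘ μ) * star U) * X := by rw [← hX]

/-- The canonical retraction j(A) = A·(-A²)^{-1/2} onto linear complex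
structures: if -A² is symmetric positive definite then j(A)² = -1, and
j fixes every complex structure J (J² = -1). -/
theorem retraction_onto_complex_structures
    (n : ℕ) (A : Matrix (Fin n) (Fin n) ℝ)
    (hA : (-(A * A)).PosDef) :
    (A * (hA.posSemidef.sqrt)⁻¹) * (A * (hA.posSemidef.sqrt)⁻¹) = -1 ∧
    (∀ (J : Matrix (Fin n) (Fin n) ℝ) (hJ : J * J = -1)
      (hJ' : (-(J * J)).PosDef), J * (hJ'.posSemidef.sqrt)⁻¹ = J) := by
  constructor
  · set S := hA.posSemidef.sqrt with hS
    have hSS : S * S = -(A * A) := posSemidef_sqrt_mul_self' hA.posSemidef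
    have hcomm : A * S = S * A := by
      apply commute_posSemidef_sqrt
      noncomm_ring
    have hMdet : IsUnit (-(A * A)).det := isUnit_iff_ne_zero.mpr (ne_of_gt hA.det_pos)
    have hSdet : IsUnit S.det := by
      have hm : S.det * S.det = (-(A * A)).det := by rw [← Matrix.det_mul, hSS]
      refine isUnit_iff_ne_zero.mpr fun h0 => ?_
      rw [h0, mul_zero] at hm
      exact hMdet.ne_zero hm.symm
    have hSinv : S * S⁻¹ = 1 := Matrix.mul_nonsing_inv S hSdet
    have hSinv' : S⁻¹ * S = 1 := Matrix.nonsing_inv_mul S hSdet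
    have hcomm' : A * S⁻¹ = S⁻¹ * A := by
      calc A * S⁻¹ = S⁻¹ * (S * A) * S⁻¹ := by
            rw [← Matrix.mul_assoc, hSinv', one_mul]
        _ = S⁻¹ * (A * S) * S⁻¹ := by rw [hcomm]
        _ = S⁻¹ * A * (S * S⁻¹) := by simp only [Matrix.mul_assoc]
        _ = S⁻¹ * A := by rw [hSinv, mul_one]
    have hAA : A * A = -(S * S) := by rw [hSS, neg_neg]
    calc (A * S⁻¹) * (A * S⁻¹) = A * (S⁻¹ * A) * S⁻¹ := by
          simp only [Matrix.mul_assoc]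
      _ = A * (A * S⁻¹) * S⁻¹ := by rw [← hcomm']
      _ = (A * A) * (S⁻¹ * S⁻¹) := by simp only [Matrix.mul_assoc]
      _ = -(S * (S * S⁻¹) * S⁻¹) := by rw [hAA]; simp only [Matrix.mul_assoc, neg_mul]
      _ = -1 := by rw [hSinv, mul_one, hSinv]
  · intro J hJ hJ'
    have h1 : (-(J * J)) = 1 := by rw [hJ]; simp
    have hone : ((1 : Matrix (Fin n) (Fin n) ℝ)).PosSemidef := Matrix.PosSemidef.one
    have : (1 : Matrix (Fin n) (Fin n) ℝ) = hJ'.posSemidef.sqrt := by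
      exact (posSemidef_sqrt_eq_one' hJ'.posSemidef h1).symm
    rw [← this, inv_one, mul_one]
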